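/- Let (g_n) be a sequence in SL(d,ℝ) such that σ_k(g_n)/σ_{k+1}(g_n) → ∞, U_k(g_n) → V_0 ∈ Gr_k(ℝ^d), and U_{d−k}(g_n⁻¹) → W_0 ∈ Gr_{d−k}(ℝ^d). Then for every V ∈ Gr_k(ℝ^d) transverse to W_0 (i.e. V ⊕ W_0 = ℝ^d) one has g_n · V → V_0, and the convergence is uniform on any compact subset of the open set of k-planes transverse to W_0. -/

import Mathlib

open Filter Metric Module Matrix

noncomputable def sval {d : ℕ} (g : Matrix (Fin d) (Fin d) ℝ) (i : ℕ) : ℝ :=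
  if h : 1 ≤ i ∧ i ≤ d then
    Real.sqrt ((Matrix.isHermitian_mul_conjTranspose_self g).eigenvalues
      (Tuple.sort (Matrix.isHermitian_mul_conjTranspose_self g).eigenvalues ⟨d - i, by omega⟩))
  else 0

noncomputable def Usp {d : ℕ} (g : Matrix (Fin d) (Fin d) ℝ) (k : ℕ) :
    Submodule ℝ (EuclideanSpace ℝ (Fin d)) :=
  ⨆ (μ : ℝ) (_ : (sval g k) ^ 2 ≤ μ),
    Module.End.eigenspace (Matrix.toEuclideanLin (g * gᴴ)) μ

noncomputable def projCLM {d : ℕ} (V : Submodule ℝ (EuclideanSpace ℝ (Fin d))) :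
    EuclideanSpace ℝ (Fin d) →L[ℝ] EuclideanSpace ℝ (Fin d) :=
  V.subtypeL.comp V.orthogonalProjection

noncomputable def grDist {d : ℕ} (V W : Submodule ℝ (EuclideanSpace ℝ (Fin d))) : ℝ :=
  ‖projCLM V - projCLM W‖

noncomputable def matNorm {d : ℕ} (g : Matrix (Fin d) (Fin d) ℝ) : ℝ :=
  ‖(Matrix.toEuclideanCLM (𝕜 := ℝ) g)‖




open Module Submodule
variable {d : ℕ}


lemma eigLin (A : Matrix (Fin d) (Fin d) ℝ) (hA : A.IsHermitian) (i : Fin d) :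
    Matrix.toEuclideanLin A (hA.eigenvectorBasis i) = hA.eigenvalues i • hA.eigenvectorBasis i := by
  apply (WithLp.equiv 2 _).injective
  ext j
  have := hA.mulVec_eigenvectorBasis i
  rw [Matrix.toEuclideanLin_apply]
  exact congrFun this j |>.trans (by simp)

lemma coeff_zero (A : Matrix (Fin d) (Fin d) ℝ) (hA : A.IsHermitian) {μ : ℝ}
    {x : EuclideanSpace ℝ (Fin d)} (hx : x ∈ Module.End.eigenspace (Matrix.toEuclideanLin A) μ)
    {i : Fin d} (hi : hA.eigenvalues i ≠ μ) : inner (𝕜 := ℝ) (hA.eigenvectorBasis i) x = 0 := by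
  have hsym : (Matrix.toEuclideanLin A).IsSymmetric := Matrix.isHermitian_iff_isSymmetric.1 hA
  have hx' : Matrix.toEuclideanLin A x = μ • x := by
    simpa using (Module.End.mem_eigenspace_iff.1 hx)
  have h1 : inner (𝕜 := ℝ) (hA.eigenvectorBasis i) (Matrix.toEuclideanLin A x)
      = μ * inner ℝ (hA.eigenvectorBasis i) x := by rw [hx', inner_smul_right]
  have h2 : inner (𝕜 := ℝ) (hA.eigenvectorBasis i) (Matrix.toEuclideanLin A x)
      = hA.eigenvalues i * inner ℝ (hA.eigenvectorBasis i) x := by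
    rw [← hsym, eigLin A hA i, inner_smul_left]
    simp
  have := h2.symm.trans h1
  rcases mul_eq_mul_right_iff.1 this with h | h
  · exact absurd h hi
  · exact h

lemma mem_span_eigen (A : Matrix (Fin d) (Fin d) ℝ) (hA : A.IsHermitian) {μ : ℝ}
    {x : EuclideanSpace ℝ (Fin d)} (hx : x ∈ Module.End.eigenspace (Matrix.toEuclideanLin A) μ) :
    x ∈ Submodule.span ℝ (⇑hA.eigenvectorBasis '' {i | hA.eigenvalues i = μ}) := by
  classical
  have hrepr := hA.eigenvectorBasis.sum_repr' x
  rw [← hrepr]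
  apply Submodule.sum_mem
  intro i _
  by_cases h : hA.eigenvalues i = μ
  · exact Submodule.smul_mem _ _ (Submodule.subset_span ⟨i, h, rfl⟩)
  · rw [coeff_zero A hA hx h]
    simp

lemma span_char (A : Matrix (Fin d) (Fin d) ℝ) (hA : A.IsHermitian) (t : ℝ) :
    (⨆ (μ : ℝ) (_ : t ≤ μ), Module.End.eigenspace (Matrix.toEuclideanLin A) μ)
      = Submodule.span ℝ (⇑hA.eigenvectorBasis '' {i | t ≤ hA.eigenvalues i}) := by
  apply le_antisymm
  · apply iSup₂_le
    intro μ hμ x hx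
    refine Submodule.span_mono ?_ (mem_span_eigen A hA hx)
    exact Set.image_mono (fun i hi => by simp only [Set.mem_setOf_eq] at *; rw [hi]; exact hμ)
  · rw [Submodule.span_le]
    rintro _ ⟨i, hi, rfl⟩
    have : hA.eigenvectorBasis i ∈ Module.End.eigenspace (Matrix.toEuclideanLin A) (hA.eigenvalues i) := by
      rw [Module.End.mem_eigenspace_iff]
      simpa using eigLin A hA i
    exact Submodule.mem_iSup_of_mem _ (Submodule.mem_iSup_of_mem hi this)

lemma exists_eigenvalue (A : Matrix (Fin d) (Fin d) ℝ) (hA : A.IsHermitian) {μ : ℝ}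
    {x : EuclideanSpace ℝ (Fin d)} (hx : x ∈ Module.End.eigenspace (Matrix.toEuclideanLin A) μ)
    (hx0 : x ≠ 0) : ∃ i, hA.eigenvalues i = μ := by
  by_contra h
  push_neg at h
  apply hx0
  have hrepr := hA.eigenvectorBasis.sum_repr' x
  rw [← hrepr]
  apply Finset.sum_eq_zero
  intro i _
  rw [coeff_zero A hA hx (h i)]
  simp


lemma coeff_vanish (b : OrthonormalBasis (Fin d) ℝ (EuclideanSpace ℝ (Fin d))) (s : Set (Fin d)) {x : EuclideanSpace ℝ (Fin d)}
    (hx : x ∈ Submodule.span ℝ (⇑b '' s)) {i : Fin d} (hi : i ∉ s) :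
    inner (𝕜 := ℝ) (b i) x = 0 := by
  have : Submodule.span ℝ {(b i : EuclideanSpace ℝ (Fin d))} ⟂ Submodule.span ℝ (⇑b '' s) := by
    rw [Submodule.isOrtho_span]
    rintro u (rfl : u = b i) v ⟨j, hj, rfl⟩
    exact b.orthonormal.2 (fun h => hi (h ▸ hj))
  exact (Submodule.mem_orthogonal' _ _).1 (this (Submodule.mem_span_singleton_self _)) x hx

lemma parseval (b : OrthonormalBasis (Fin d) ℝ (EuclideanSpace ℝ (Fin d))) (x : EuclideanSpace ℝ (Fin d)) :
    ‖x‖^2 = ∑ i, (inner (𝕜 := ℝ) (b i) x)^2 := by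
  have := b.repr.norm_map x
  rw [← this, EuclideanSpace.norm_eq]
  rw [Real.sq_sqrt (by positivity)]
  congr 1; ext i
  rw [b.repr_apply_apply, Real.norm_eq_abs, sq_abs]

lemma quad_eq (b : OrthonormalBasis (Fin d) ℝ (EuclideanSpace ℝ (Fin d))) (T : EuclideanSpace ℝ (Fin d) →ₗ[ℝ] EuclideanSpace ℝ (Fin d))
    (ν : Fin d → ℝ) (hb : ∀ i, T (b i) = ν i • b i) (x : EuclideanSpace ℝ (Fin d)) :
    inner (𝕜 := ℝ) (T x) x = ∑ i, ν i * (inner (𝕜 := ℝ) (b i) x)^2 := by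
  have hTx : T x = ∑ j, (ν j * inner (𝕜 := ℝ) (b j) x) • b j := by
    conv_lhs => rw [← b.sum_repr' x]
    rw [map_sum]
    congr 1; ext j
    rw [_root_.map_smul, hb j, smul_smul, mul_comm]
  rw [hTx, sum_inner]
  congr 1; ext j
  rw [real_inner_smul_left]; ring
lemma lin_mul (P Q : Matrix (Fin d) (Fin d) ℝ) (x : EuclideanSpace ℝ (Fin d)) :
    Matrix.toEuclideanLin (P * Q) x = Matrix.toEuclideanLin P (Matrix.toEuclideanLin Q x) := by
  have h1 : ∀ (N : Matrix (Fin d) (Fin d) ℝ) y, Matrix.toEuclideanLin N y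
      = Matrix.toEuclideanCLM (𝕜 := ℝ) N y := by
    intro N y
    rw [← Matrix.coe_toEuclideanCLM_eq_toEuclideanLin]; rfl
  rw [h1, h1, h1, _root_.map_mul, ContinuousLinearMap.mul_apply]

lemma lin_one (x : EuclideanSpace ℝ (Fin d)) :
    Matrix.toEuclideanLin (1 : Matrix (Fin d) (Fin d) ℝ) x = x := by
  have h1 : ∀ (N : Matrix (Fin d) (Fin d) ℝ) y, Matrix.toEuclideanLin N y
      = Matrix.toEuclideanCLM (𝕜 := ℝ) N y := by
    intro N y
    rw [← Matrix.coe_toEuclideanCLM_eq_toEuclideanLin]; rfl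
  rw [h1, _root_.map_one, ContinuousLinearMap.one_apply]

lemma norm_sq_eq_inner_CTC (M : Matrix (Fin d) (Fin d) ℝ) (x : EuclideanSpace ℝ (Fin d)) :
    ‖Matrix.toEuclideanLin M x‖^2 = inner (𝕜 := ℝ) (Matrix.toEuclideanLin (Mᴴ * M) x) x := by
  have h1 : ∀ (N : Matrix (Fin d) (Fin d) ℝ) y, Matrix.toEuclideanLin N y
      = Matrix.toEuclideanCLM (𝕜 := ℝ) N y := by
    intro N y
    rw [← Matrix.coe_toEuclideanCLM_eq_toEuclideanLin]; rfl
  rw [h1, h1, _root_.map_mul]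
  have hadj : (Matrix.toEuclideanCLM (𝕜 := ℝ) Mᴴ)
      = ContinuousLinearMap.adjoint (Matrix.toEuclideanCLM (𝕜 := ℝ) M) := by
    rw [← ContinuousLinearMap.star_eq_adjoint, ← map_star]; rfl
  rw [ContinuousLinearMap.mul_apply, hadj, ContinuousLinearMap.adjoint_inner_left,
    ← real_inner_self_eq_norm_sq]

lemma eig_ne_zero {A A' : Matrix (Fin d) (Fin d) ℝ} (hA'A : A' * A = 1)
    (hA : A.IsHermitian) (i : Fin d) : hA.eigenvalues i ≠ 0 := by
  intro h0
  have h1 := eigLin A hA i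
  rw [h0, zero_smul] at h1
  have h2 : (hA.eigenvectorBasis i : EuclideanSpace ℝ (Fin d)) = 0 := by
    have : (hA.eigenvectorBasis i : EuclideanSpace ℝ (Fin d))
        = Matrix.toEuclideanLin (A' * A) (hA.eigenvectorBasis i) := by
      rw [hA'A, lin_one]
    rw [this, lin_mul, h1, map_zero]
  exact hA.eigenvectorBasis.orthonormal.ne_zero i h2

lemma eig_map {M A B : Matrix (Fin d) (Fin d) ℝ} (h : B * M = M * A) {μ : ℝ}
    {x : EuclideanSpace ℝ (Fin d)} (hx : Matrix.toEuclideanLin A x = μ • x) :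
    Matrix.toEuclideanLin B (Matrix.toEuclideanLin M x)
      = μ • Matrix.toEuclideanLin M x := by
  rw [← lin_mul, h, lin_mul, hx, _root_.map_smul]

lemma eig_orth {A : Matrix (Fin d) (Fin d) ℝ} (hA : A.IsHermitian) {μ₁ μ₂ : ℝ}
    {x y : EuclideanSpace ℝ (Fin d)} (hx : Matrix.toEuclideanLin A x = μ₁ • x)
    (hy : Matrix.toEuclideanLin A y = μ₂ • y) (hne : μ₁ ≠ μ₂) :
    inner (𝕜 := ℝ) x y = 0 := by
  have hsym : (Matrix.toEuclideanLin A).IsSymmetric := Matrix.isHermitian_iff_isSymmetric.1 hA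
  have h1 : μ₁ * inner (𝕜 := ℝ) x y = μ₂ * inner (𝕜 := ℝ) x y := by
    calc μ₁ * inner (𝕜 := ℝ) x y = inner (𝕜 := ℝ) (μ₁ • x) y := by rw [real_inner_smul_left]
      _ = inner (𝕜 := ℝ) (Matrix.toEuclideanLin A x) y := by rw [hx]
      _ = inner (𝕜 := ℝ) x (Matrix.toEuclideanLin A y) := hsym x y
      _ = inner (𝕜 := ℝ) x (μ₂ • y) := by rw [hy]
      _ = μ₂ * inner (𝕜 := ℝ) x y := by rw [real_inner_smul_right]
  by_contra hne0
  exact hne (mul_right_cancel₀ hne0 h1)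

lemma quad_bound_le (b : OrthonormalBasis (Fin d) ℝ (EuclideanSpace ℝ (Fin d)))
    (T : EuclideanSpace ℝ (Fin d) →ₗ[ℝ] EuclideanSpace ℝ (Fin d))
    (ν : Fin d → ℝ) (hb : ∀ i, T (b i) = ν i • b i) (s : Set (Fin d))
    {x : EuclideanSpace ℝ (Fin d)} (hx : x ∈ Submodule.span ℝ (⇑b '' s))
    {τ : ℝ} (hτ : ∀ i ∈ s, ν i ≤ τ) :
    inner (𝕜 := ℝ) (T x) x ≤ τ * ‖x‖^2 := by
  classical
  rw [quad_eq b T ν hb x, parseval b x, Finset.mul_sum]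
  apply Finset.sum_le_sum
  intro i _
  by_cases hi : i ∈ s
  · have := sq_nonneg (inner (𝕜 := ℝ) (b i) x)
    nlinarith [hτ i hi]
  · rw [coeff_vanish b s hx hi]
    simp

lemma quad_bound_ge (b : OrthonormalBasis (Fin d) ℝ (EuclideanSpace ℝ (Fin d)))
    (T : EuclideanSpace ℝ (Fin d) →ₗ[ℝ] EuclideanSpace ℝ (Fin d))
    (ν : Fin d → ℝ) (hb : ∀ i, T (b i) = ν i • b i) (s : Set (Fin d))
    {x : EuclideanSpace ℝ (Fin d)} (hx : x ∈ Submodule.span ℝ (⇑b '' s))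
    {τ : ℝ} (hτ : ∀ i ∈ s, τ ≤ ν i) :
    τ * ‖x‖^2 ≤ inner (𝕜 := ℝ) (T x) x := by
  classical
  rw [quad_eq b T ν hb x, parseval b x, Finset.mul_sum]
  apply Finset.sum_le_sum
  intro i _
  by_cases hi : i ∈ s
  · have := sq_nonneg (inner (𝕜 := ℝ) (b i) x)
    nlinarith [hτ i hi]
  · rw [coeff_vanish b s hx hi]
    simp


lemma sval_sq_eq (M : Matrix (Fin d) (Fin d) ℝ) {i : ℕ} (h1 : 1 ≤ i) (h2 : i ≤ d) :
    (sval M i)^2 = (Matrix.isHermitian_mul_conjTranspose_self M).eigenvalues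
      (Tuple.sort (Matrix.isHermitian_mul_conjTranspose_self M).eigenvalues
        ⟨d - i, by omega⟩) := by
  rw [sval, dif_pos ⟨h1, h2⟩,
    Real.sq_sqrt (Matrix.eigenvalues_self_mul_conjTranspose_nonneg M _)]

lemma sval_nonneg (M : Matrix (Fin d) (Fin d) ℝ) (i : ℕ) : 0 ≤ sval M i := by
  rw [sval]
  split
  · exact Real.sqrt_nonneg _
  · exact le_refl 0

lemma sval_pos {M M' : Matrix (Fin d) (Fin d) ℝ} (hM'M : M' * M = 1) (hMM' : M * M' = 1)
    {i : ℕ} (h1 : 1 ≤ i) (h2 : i ≤ d) : 0 < sval M i := by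
  have hBinv : (M'ᴴ * M') * (M * Mᴴ) = 1 := by
    calc (M'ᴴ * M') * (M * Mᴴ) = M'ᴴ * ((M' * M) * Mᴴ) := by
          simp only [Matrix.mul_assoc]
      _ = M'ᴴ * Mᴴ := by rw [hM'M, Matrix.one_mul]
      _ = (M * M')ᴴ := by rw [Matrix.conjTranspose_mul]
      _ = 1 := by rw [hMM', Matrix.conjTranspose_one]
  rw [sval, dif_pos ⟨h1, h2⟩]
  apply Real.sqrt_pos.2
  rcases lt_or_eq_of_le (Matrix.eigenvalues_self_mul_conjTranspose_nonneg M
    ((Tuple.sort (Matrix.isHermitian_mul_conjTranspose_self M).eigenvalues ⟨d - i, by omega⟩)))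
    with h | h
  · exact h
  · exact absurd h.symm (eig_ne_zero hBinv (Matrix.isHermitian_mul_conjTranspose_self M) _)

lemma eig_lt_bound {k : ℕ} (hk : 1 ≤ k) (hkd : k < d) (M : Matrix (Fin d) (Fin d) ℝ) {μ : ℝ}
    (hμ : ∃ i, (Matrix.isHermitian_mul_conjTranspose_self M).eigenvalues i = μ)
    (hlt : μ < (sval M k)^2) : μ ≤ (sval M (k+1))^2 := by
  obtain ⟨i, rfl⟩ := hμ
  set e := (Matrix.isHermitian_mul_conjTranspose_self M).eigenvalues with he
  set s := Tuple.sort e with hs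
  have hm := Tuple.monotone_sort e
  rw [sval_sq_eq M hk (le_of_lt hkd)] at hlt
  rw [sval_sq_eq M (by omega : 1 ≤ k+1) (by omega : k+1 ≤ d)]
  set p := s.symm i with hp
  have hip : s p = i := Equiv.apply_symm_apply s i
  have hplt : (p : ℕ) < d - k := by
    by_contra hge
    push_neg at hge
    have h1 : (⟨d - k, by omega⟩ : Fin d) ≤ p := by
      rw [Fin.le_def]; exact hge
    have h2 := hm h1
    simp only [Function.comp_apply] at h2
    rw [hip] at h2
    exact absurd h2 (not_le.2 hlt)
  have h3 : p ≤ (⟨d - (k+1), by omega⟩ : Fin d) := by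
    rw [Fin.le_def]
    simp only []
    omega
  have h4 := hm h3
  simp only [Function.comp_apply] at h4
  rw [hip] at h4
  exact h4


lemma projCLM_apply (V : Submodule ℝ (EuclideanSpace ℝ (Fin d))) (x) :
    projCLM V x = (orthogonalProjection V x : EuclideanSpace ℝ (Fin d)) := rfl

lemma projCLM_mem (V : Submodule ℝ (EuclideanSpace ℝ (Fin d))) (x) : projCLM V x ∈ V :=
  (orthogonalProjection V x).2

lemma projCLM_eq_self (V : Submodule ℝ (EuclideanSpace ℝ (Fin d))) {x} (hx : x ∈ V) :
    projCLM V x = x := by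
  rw [projCLM_apply]; exact Submodule.starProjection_eq_self_iff.2 hx

lemma projCLM_eq_zero (V : Submodule ℝ (EuclideanSpace ℝ (Fin d))) {x} (hx : x ∈ Vᗮ) :
    projCLM V x = 0 := by
  rw [projCLM_apply, Submodule.orthogonalProjectionOnto_apply_of_mem_orthogonal hx]
  rfl

lemma projCLM_norm_le (V : Submodule ℝ (EuclideanSpace ℝ (Fin d))) (x) :
    ‖projCLM V x‖ ≤ ‖x‖ := by
  rw [projCLM_apply]
  have := orthogonalProjection_norm_le V
  calc ‖(orthogonalProjection V x : EuclideanSpace ℝ (Fin d))‖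
      ≤ ‖orthogonalProjection V‖ * ‖x‖ := (orthogonalProjection V).le_opNorm x
    _ ≤ 1 * ‖x‖ := mul_le_mul_of_nonneg_right this (norm_nonneg x)
    _ = ‖x‖ := one_mul _

lemma sub_projCLM_norm_le (V : Submodule ℝ (EuclideanSpace ℝ (Fin d))) (x) :
    ‖x - projCLM V x‖ ≤ ‖x‖ := by
  have : x - projCLM V x = projCLM Vᗮ x := by
    rw [projCLM_apply (V := Vᗮ)]
    exact (Submodule.starProjection_orthogonal_val (K := V) x).symm
  rw [this]; exact projCLM_norm_le _ x

lemma projCLM_min (V : Submodule ℝ (EuclideanSpace ℝ (Fin d))) (x : EuclideanSpace ℝ (Fin d))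
    {y} (hy : y ∈ V) : ‖x - projCLM V x‖ ≤ ‖x - y‖ := by
  have hperp : x - projCLM V x ∈ Vᗮ := sub_starProjection_mem_orthogonal (K := V) x
  have hmem : projCLM V x - y ∈ V := V.sub_mem (projCLM_mem V x) hy
  have hin : inner (𝕜 := ℝ) (x - projCLM V x) (projCLM V x - y) = 0 := by
    rw [real_inner_comm]; exact hperp _ hmem
  have : ‖x - y‖^2 = ‖x - projCLM V x‖^2 + ‖projCLM V x - y‖^2 := by
    have hxy : x - y = (x - projCLM V x) + (projCLM V x - y) := by abel
    rw [hxy, norm_add_sq_real, hin]; ring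
  nlinarith [norm_nonneg (x - projCLM V x), norm_nonneg (x - y), norm_nonneg (projCLM V x - y)]

lemma rank_eq_of_lt_one {V W : Submodule ℝ (EuclideanSpace ℝ (Fin d))}
    (h : ‖projCLM V - projCLM W‖ < 1) : finrank ℝ V = finrank ℝ W := by
  by_contra hne
  have key : ∀ (V W : Submodule ℝ (EuclideanSpace ℝ (Fin d))),
      finrank ℝ W < finrank ℝ V → 1 ≤ ‖projCLM V - projCLM W‖ := by
    intro V W hlt
    have h1 : finrank ℝ W + finrank ℝ Wᗮ = d := by
      simpa using Submodule.finrank_add_finrank_orthogonal W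
    have h2 : finrank ℝ ↥(V ⊔ Wᗮ) + finrank ℝ ↥(V ⊓ Wᗮ) = finrank ℝ V + finrank ℝ Wᗮ :=
      Submodule.finrank_sup_add_finrank_inf_eq V Wᗮ
    have h3 : finrank ℝ ↥(V ⊔ Wᗮ) ≤ d := by
      simpa using Submodule.finrank_le (V ⊔ Wᗮ)
    have h4 : 0 < finrank ℝ ↥(V ⊓ Wᗮ) := by omega
    obtain ⟨x, hx, hx0⟩ := Submodule.exists_mem_ne_zero_of_ne_bot (p := V ⊓ Wᗮ)
      (by intro hbot; rw [hbot] at h4; simp at h4)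
    have hxV : x ∈ V := hx.1
    have hxW : x ∈ Wᗮ := hx.2
    have : (projCLM V - projCLM W) x = x := by
      rw [ContinuousLinearMap.sub_apply, projCLM_eq_self V hxV, projCLM_eq_zero W hxW, sub_zero]
    have hb := (projCLM V - projCLM W).le_opNorm x
    rw [this] at hb
    have hxpos : 0 < ‖x‖ := norm_pos_iff.2 hx0
    nlinarith
  rcases lt_or_gt_of_ne hne with hlt | hlt
  · exact absurd (key W V hlt) (by rw [norm_sub_rev] at h; linarith)
  · exact absurd (key V W hlt) (by linarith)

lemma proj_dist_le {A B : Submodule ℝ (EuclideanSpace ℝ (Fin d))}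
    (hd : finrank ℝ A = finrank ℝ B) {η : ℝ} (hη0 : 0 ≤ η) (hη : η ≤ 1/2)
    (h : ∀ a ∈ A, ‖a - projCLM B a‖ ≤ η * ‖a‖) :
    ‖projCLM A - projCLM B‖ ≤ 3 * η := by
  have hB' : ∀ b ∈ B, ‖b - projCLM A b‖ ≤ 2 * η * ‖b‖ := by
    intro b hb
    let f : A →ₗ[ℝ] B := LinearMap.codRestrict B
      (((projCLM B) : EuclideanSpace ℝ (Fin d) →ₗ[ℝ] EuclideanSpace ℝ (Fin d)).comp A.subtype)
      (fun a => projCLM_mem B a)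
    have hfapp : ∀ a : A, (f a : EuclideanSpace ℝ (Fin d)) = projCLM B a := fun a => rfl
    have hinj : Function.Injective f := by
      rw [← LinearMap.ker_eq_bot, LinearMap.ker_eq_bot']
      intro a ha
      have h0 : projCLM B (a : EuclideanSpace ℝ (Fin d)) = 0 := by
        rw [← hfapp a, ha]; rfl
      have h5 := h a a.2
      rw [h0, sub_zero] at h5
      have h6 : ‖(a : EuclideanSpace ℝ (Fin d))‖ = 0 := by nlinarith [norm_nonneg (a : EuclideanSpace ℝ (Fin d))]
      ext1
      simpa using norm_eq_zero.1 h6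
    have hsurj : Function.Surjective f :=
      (LinearMap.injective_iff_surjective_of_finrank_eq_finrank hd).1 hinj
    obtain ⟨a, ha⟩ := hsurj ⟨b, hb⟩
    have hproj : projCLM B (a : EuclideanSpace ℝ (Fin d)) = b := by
      rw [← hfapp a, ha]
    have hha := h a a.2
    rw [hproj] at hha
    have hnorm : ‖(a : EuclideanSpace ℝ (Fin d))‖ ≤ 2 * ‖b‖ := by
      have : ‖(a : EuclideanSpace ℝ (Fin d))‖ ≤ ‖(a : EuclideanSpace ℝ (Fin d)) - b‖ + ‖b‖ := by
        have h7 := norm_add_le ((a : EuclideanSpace ℝ (Fin d)) - b) b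
        rw [sub_add_cancel] at h7
        exact h7
      have h2 : ‖(a : EuclideanSpace ℝ (Fin d)) - b‖ ≤ η * ‖(a : EuclideanSpace ℝ (Fin d))‖ := by
        rw [← hproj]; exact h a a.2
      nlinarith [norm_nonneg (a : EuclideanSpace ℝ (Fin d))]
    calc ‖b - projCLM A b‖ ≤ ‖b - (a : EuclideanSpace ℝ (Fin d))‖ := projCLM_min A b a.2
      _ = ‖(a : EuclideanSpace ℝ (Fin d)) - b‖ := by rw [norm_sub_rev]
      _ ≤ η * ‖(a : EuclideanSpace ℝ (Fin d))‖ := by rw [← hproj]; exact h a a.2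
      _ ≤ 2 * η * ‖b‖ := by nlinarith
  have hAperp : ∀ w ∈ Aᗮ, ‖projCLM B w‖ ≤ 2 * η * ‖w‖ := by
    intro w hw
    set t := projCLM B w with ht
    have htB : t ∈ B := projCLM_mem B w
    have h1 : inner (𝕜 := ℝ) t t = inner (𝕜 := ℝ) w t := by
      have e := inner_starProjection_left_eq_right B w t
      have e2 : B.starProjection t = t :=
        starProjection_eq_self_iff.2 htB
      rw [e2] at e
      exact e
    have h2 : inner (𝕜 := ℝ) w (projCLM A t) = 0 := by
      rw [real_inner_comm]; exact hw _ (projCLM_mem A t)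
    have h3 : inner (𝕜 := ℝ) w t = inner (𝕜 := ℝ) w (t - projCLM A t) := by
      rw [inner_sub_right, h2, sub_zero]
    have h4 : ‖t‖^2 ≤ ‖w‖ * (2 * η * ‖t‖) := by
      rw [← real_inner_self_eq_norm_sq, h1, h3]
      calc inner (𝕜 := ℝ) w (t - projCLM A t) ≤ ‖w‖ * ‖t - projCLM A t‖ := real_inner_le_norm _ _
        _ ≤ ‖w‖ * (2 * η * ‖t‖) := by
            have := hB' t htB
            exact mul_le_mul_of_nonneg_left this (norm_nonneg w)
    rcases eq_or_lt_of_le (norm_nonneg t) with h0 | h0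
    · rw [← h0]; positivity
    · nlinarith
  apply ContinuousLinearMap.opNorm_le_bound _ (by linarith)
  intro x
  have hsplit : (projCLM A - projCLM B) x
      = (projCLM A x - projCLM B (projCLM A x)) - projCLM B (x - projCLM A x) := by
    rw [ContinuousLinearMap.sub_apply, map_sub]
    abel
  rw [hsplit]
  have e1 : ‖projCLM A x - projCLM B (projCLM A x)‖ ≤ η * ‖projCLM A x‖ :=
    h _ (projCLM_mem A x)
  have e2 : ‖projCLM B (x - projCLM A x)‖ ≤ 2 * η * ‖x - projCLM A x‖ :=
    hAperp _ (sub_starProjection_mem_orthogonal (K := A) x)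
  calc ‖(projCLM A x - projCLM B (projCLM A x)) - projCLM B (x - projCLM A x)‖
      ≤ ‖projCLM A x - projCLM B (projCLM A x)‖ + ‖projCLM B (x - projCLM A x)‖ :=
        norm_sub_le _ _
    _ ≤ η * ‖projCLM A x‖ + 2 * η * ‖x - projCLM A x‖ := by linarith
    _ ≤ η * ‖x‖ + 2 * η * ‖x‖ := by
        have := projCLM_norm_le A x
        have := sub_projCLM_norm_le A x
        have h1 : η * ‖projCLM A x‖ ≤ η * ‖x‖ := by nlinarith
        have h2 : 2 * η * ‖x - projCLM A x‖ ≤ 2 * η * ‖x‖ := by nlinarith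
        linarith
    _ = 3 * η * ‖x‖ := by ring

lemma unif_transversality (W₀ : Submodule ℝ (EuclideanSpace ℝ (Fin d)))
    (S : Set (Submodule ℝ (EuclideanSpace ℝ (Fin d)))) (hS : ∀ V ∈ S, IsCompl V W₀)
    (hK : IsCompact (projCLM '' S)) :
    ∃ c : ℝ, 0 < c ∧ ∀ V ∈ S, ∀ v ∈ V, c * ‖v‖ ≤ ‖v - projCLM W₀ v‖ := by
  classical
  set Q := projCLM W₀ with hQ
  set Φ : (EuclideanSpace ℝ (Fin d) →L[ℝ] EuclideanSpace ℝ (Fin d)) →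
      (EuclideanSpace ℝ (Fin d) →L[ℝ] EuclideanSpace ℝ (Fin d)) :=
    fun P => (1 - Q) * P + Q * (1 - P) with hΦ
  have hΦapp : ∀ P x, Φ P x = (P x - Q (P x)) + Q (x - P x) := by
    intro P x
    simp [hΦ, ContinuousLinearMap.mul_apply, ContinuousLinearMap.sub_apply,
      ContinuousLinearMap.one_apply, map_sub]
  have hcont : Continuous Φ := by
    apply Continuous.add
    · exact continuous_const.mul continuous_id
    · exact continuous_const.mul (continuous_const.sub continuous_id)
  have hunit : ∀ V ∈ S, IsUnit (Φ (projCLM V)) := by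
    intro V hV
    set P := projCLM V with hP
    have hinj : Function.Injective (Φ P) := by
      intro x y hxy
      have hxy0 : Φ P (x - y) = 0 := by rw [map_sub, hxy, sub_self]
      set z := x - y with hz
      have h0 : (P z - Q (P z)) + Q (z - P z) = 0 := by rw [← hΦapp]; exact hxy0
      have m1 : P z - Q (P z) ∈ W₀ᗮ := sub_starProjection_mem_orthogonal (K := W₀) (P z)
      have m2 : Q (z - P z) ∈ W₀ := projCLM_mem W₀ _
      have hu0 : P z - Q (P z) = 0 := by
        have hmem : P z - Q (P z) ∈ W₀ := by
          have : P z - Q (P z) = -(Q (z - P z)) := by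
            rw [eq_neg_iff_add_eq_zero]; exact h0
          rw [this]; exact W₀.neg_mem m2
        have h6 : inner (𝕜 := ℝ) (P z - Q (P z)) (P z - Q (P z)) = 0 := m1 _ hmem
        exact inner_self_eq_zero.1 h6
      have hPz0 : P z = 0 := by
        have hPzW : P z ∈ W₀ := by
          have : P z = Q (P z) := by rwa [sub_eq_zero] at hu0
          rw [this]; exact projCLM_mem W₀ _
        exact (Submodule.disjoint_def.1 (hS V hV).disjoint) _ (projCLM_mem V z) hPzW
      have hQz0 : Q z = 0 := by
        have := h0
        rw [hPz0] at this
        simpa using this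
      have hzV : z ∈ Vᗮ := by
        rw [hP] at hPz0
        rw [projCLM_apply] at hPz0
        exact orthogonalProjectionOnto_eq_zero_iff.1 (by ext1; simpa using hPz0)
      have hzW : z ∈ W₀ᗮ := by
        rw [hQ, projCLM_apply] at hQz0
        exact orthogonalProjectionOnto_eq_zero_iff.1 (by ext1; simpa using hQz0)
      have hzbot : z ∈ (V ⊔ W₀)ᗮ := by
        rw [← Submodule.inf_orthogonal]
        exact ⟨hzV, hzW⟩
      rw [(hS V hV).codisjoint.eq_top, Submodule.top_orthogonal_eq_bot] at hzbot
      have : z = 0 := hzbot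
      rw [hz, sub_eq_zero] at this
      exact this
    have hbij : Function.Bijective ((Φ P) : EuclideanSpace ℝ (Fin d) →ₗ[ℝ] EuclideanSpace ℝ (Fin d)) :=
      ⟨hinj, (LinearMap.injective_iff_surjective).1 hinj⟩
    let e : EuclideanSpace ℝ (Fin d) ≃ₗ[ℝ] EuclideanSpace ℝ (Fin d) :=
      LinearEquiv.ofBijective _ hbij
    let eC : EuclideanSpace ℝ (Fin d) ≃L[ℝ] EuclideanSpace ℝ (Fin d) :=
      e.toContinuousLinearEquiv
    refine isUnit_iff_exists.2 ⟨(eC.symm : EuclideanSpace ℝ (Fin d) →L[ℝ] EuclideanSpace ℝ (Fin d)), ?_, ?_⟩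
    · refine ContinuousLinearMap.ext fun x => ?_
      rw [ContinuousLinearMap.mul_apply, ContinuousLinearMap.one_apply]
      have h7 : Φ P ((eC.symm : EuclideanSpace ℝ (Fin d) →L[ℝ] EuclideanSpace ℝ (Fin d)) x)
          = eC (eC.symm x) := rfl
      rw [h7, eC.apply_symm_apply]
    · refine ContinuousLinearMap.ext fun x => ?_
      rw [ContinuousLinearMap.mul_apply, ContinuousLinearMap.one_apply]
      have h7 : (eC.symm : EuclideanSpace ℝ (Fin d) →L[ℝ] EuclideanSpace ℝ (Fin d)) (Φ P x)
          = eC.symm (eC x) := rfl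
      rw [h7, eC.symm_apply_apply]
  rcases S.eq_empty_or_nonempty with rfl | ⟨V₀', hV₀'⟩
  · exact ⟨1, one_pos, by simp⟩
  have hKne : (projCLM '' S).Nonempty := ⟨projCLM V₀', ⟨V₀', hV₀', rfl⟩⟩
  have hfc : ContinuousOn (fun P => ‖Ring.inverse (Φ P)‖) (projCLM '' S) := by
    intro P hP
    obtain ⟨V, hV, rfl⟩ := hP
    have hu := hunit V hV
    have h1 : ContinuousAt Ring.inverse (Φ (projCLM V)) := by
      have := NormedRing.inverse_continuousAt hu.unit
      rwa [IsUnit.unit_spec] at this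
    exact ((h1.comp (hcont.continuousAt)).norm).continuousWithinAt
  obtain ⟨Pm, hPm, hmax⟩ := hK.exists_isMaxOn hKne hfc
  set M := ‖Ring.inverse (Φ Pm)‖ with hM
  rw [isMaxOn_iff] at hmax
  have hM0 : 0 ≤ M := norm_nonneg _
  refine ⟨1 / (M + 1), by positivity, ?_⟩
  intro V hV v hv
  have hPv : projCLM V v = v := projCLM_eq_self V hv
  have happ : Φ (projCLM V) v = v - Q v := by
    rw [hΦapp, hPv]
    simp
  have hinv : Ring.inverse (Φ (projCLM V)) * (Φ (projCLM V)) = 1 :=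
    Ring.inverse_mul_cancel _ (hunit V hV)
  have hvnorm : ‖v‖ ≤ (M + 1) * ‖v - Q v‖ := by
    have h2 : v = Ring.inverse (Φ (projCLM V)) (Φ (projCLM V) v) := by
      rw [← ContinuousLinearMap.mul_apply, hinv, ContinuousLinearMap.one_apply]
    have h3 : ‖v‖ ≤ ‖Ring.inverse (Φ (projCLM V))‖ * ‖Φ (projCLM V) v‖ := by
      conv_lhs => rw [h2]
      exact (Ring.inverse (Φ (projCLM V))).le_opNorm _
    have h4 : ‖Ring.inverse (Φ (projCLM V))‖ ≤ M := hmax _ ⟨V, hV, rfl⟩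
    rw [happ] at h3
    have h5 : ‖Ring.inverse (Φ (projCLM V))‖ * ‖v - Q v‖ ≤ M * ‖v - Q v‖ :=
      mul_le_mul_of_nonneg_right h4 (norm_nonneg _)
    nlinarith [norm_nonneg (v - Q v)]
  rw [div_mul_eq_mul_div, one_mul, div_le_iff₀ (by positivity : (0:ℝ) < M + 1)]
  calc ‖v‖ ≤ (M + 1) * ‖v - Q v‖ := hvnorm
    _ = ‖v - Q v‖ * (M + 1) := by ring

lemma le_of_sq_le (a b : ℝ) (hb : 0 ≤ b) (h : a^2 ≤ b^2) (ha : 0 ≤ a) : a ≤ b := by nlinarith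

set_option maxHeartbeats 1600000 in
lemma key {d : ℕ} (k : ℕ) (hk : 1 ≤ k) (hkd : k < d)
    (M M' : Matrix (Fin d) (Fin d) ℝ) (hM'M : M' * M = 1) (hMM' : M * M' = 1)
    (V₀ W₀ V : Submodule ℝ (EuclideanSpace ℝ (Fin d)))
    (hV₀ : finrank ℝ V₀ = k) (hW₀ : finrank ℝ W₀ = d - k) (hVk : finrank ℝ V = k)
    (c ε : ℝ) (hc : 0 < c) (hε : 0 < ε)
    (htrans : ∀ v ∈ V, c * ‖v‖ ≤ ‖v - projCLM W₀ v‖)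
    (hUc : grDist (Usp M k) V₀ < min (1/2) (ε/2))
    (hU'c : grDist (Usp M' (d - k)) W₀ < min 1 (c/2))
    (hgap : 4 / (c * min (1/2) (ε/6)) ≤ sval M k / sval M (k+1)) :
    grDist (Submodule.map (Matrix.toEuclideanLin M) V) V₀ < ε := by
  classical
  set η := min (1/2) (ε/6) with hη
  have hη0 : 0 < η := by
    rw [hη]; apply lt_min; norm_num; linarith
  have hη2 : η ≤ 1/2 := min_le_left _ _
  have hη6 : η ≤ ε/6 := min_le_right _ _
  -- basic matrix facts
  have hB : (M * Mᴴ).IsHermitian := Matrix.isHermitian_mul_conjTranspose_self M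
  have hC : (Mᴴ * M).IsHermitian := Matrix.isHermitian_conjTranspose_mul_self M
  have hD : (M' * M'ᴴ).IsHermitian := Matrix.isHermitian_mul_conjTranspose_self M'
  have hMH : Mᴴ * M'ᴴ = 1 := by
    rw [← Matrix.conjTranspose_mul, hM'M, Matrix.conjTranspose_one]
  have hM'H : M'ᴴ * Mᴴ = 1 := by
    rw [← Matrix.conjTranspose_mul, hMM', Matrix.conjTranspose_one]
  have hDC : (M' * M'ᴴ) * (Mᴴ * M) = 1 := by
    calc (M' * M'ᴴ) * (Mᴴ * M) = M' * ((M'ᴴ * Mᴴ) * M) := by simp only [Matrix.mul_assoc]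
      _ = M' * M := by rw [hM'H, Matrix.one_mul]
      _ = 1 := hM'M
  have hCD : (Mᴴ * M) * (M' * M'ᴴ) = 1 := by
    calc (Mᴴ * M) * (M' * M'ᴴ) = Mᴴ * ((M * M') * M'ᴴ) := by simp only [Matrix.mul_assoc]
      _ = Mᴴ * M'ᴴ := by rw [hMM', Matrix.one_mul]
      _ = 1 := hMH
  set eB := hB.eigenvalues with heB
  set bB := hB.eigenvectorBasis with hbB
  set eC := hC.eigenvalues with heC
  set bC := hC.eigenvectorBasis with hbC
  set eD := hD.eigenvalues with heD
  set bD := hD.eigenvectorBasis with hbD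
  set σ := sval M k with hσ
  set σ' := sval M (k+1) with hσ'
  set s' := sval M' (d - k) with hs'
  have hσpos : 0 < σ := sval_pos hM'M hMM' hk (le_of_lt hkd)
  have hσ'pos : 0 < σ' := sval_pos hM'M hMM' (by omega) (by omega)
  have hs'pos : 0 < s' := sval_pos hMM' hM'M (by omega) (by omega)
  -- c ≤ 1
  have hc1 : c ≤ 1 := by
    have hVne : ∃ v ∈ V, v ≠ (0 : EuclideanSpace ℝ (Fin d)) := by
      have : V ≠ ⊥ := by
        intro hbot
        rw [hbot, finrank_bot] at hVk
        omega
      obtain ⟨v, hv, hv0⟩ := Submodule.exists_mem_ne_zero_of_ne_bot this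
      exact ⟨v, hv, hv0⟩
    obtain ⟨v, hv, hv0⟩ := hVne
    have h1 := htrans v hv
    have h2 : ‖v - projCLM W₀ v‖ ≤ ‖v‖ := sub_projCLM_norm_le W₀ v
    have h3 : 0 < ‖v‖ := norm_pos_iff.2 hv0
    nlinarith
  -- gap consequence : 4 * σ' ≤ c * η * σ
  have hgap' : 4 * σ' ≤ c * η * σ := by
    have hpos : 0 < c * η := by positivity
    rw [div_le_div_iff₀ hpos hσ'pos] at hgap
    nlinarith
  have hcη : c * η ≤ 1/2 := by nlinarith
  have hσ'σ : σ' < σ := by nlinarith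
  -- subspaces
  set U := Usp M k with hU
  set W' := Usp M' (d - k) with hW'
  set R : Submodule ℝ (EuclideanSpace ℝ (Fin d)) :=
    ⨆ (μ : ℝ) (_ : σ^2 ≤ μ), Module.End.eigenspace (Matrix.toEuclideanLin (Mᴴ * M)) μ with hR
  have hUspan : U = Submodule.span ℝ (⇑bB '' {i | σ^2 ≤ eB i}) := by
    rw [hU, Usp]; exact span_char (M * Mᴴ) hB (σ^2)
  have hW'span : W' = Submodule.span ℝ (⇑bD '' {j | s'^2 ≤ eD j}) := by
    rw [hW', Usp]; exact span_char (M' * M'ᴴ) hD (s'^2)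
  have hRspan : R = Submodule.span ℝ (⇑bC '' {i | σ^2 ≤ eC i}) := by
    rw [hR]; exact span_char (Mᴴ * M) hC (σ^2)
  -- dimensions of U and W'
  have hdimU : finrank ℝ U = k := by
    have h1 : ‖projCLM U - projCLM V₀‖ < 1 := by
      have : grDist U V₀ < 1 := lt_of_lt_of_le hUc (le_trans (min_le_left _ _) (by norm_num))
      rwa [grDist] at this
    rw [rank_eq_of_lt_one h1, hV₀]
  have hdimW' : finrank ℝ W' = d - k := by
    have h1 : ‖projCLM W' - projCLM W₀‖ < 1 := by
      have : grDist W' W₀ < 1 := lt_of_lt_of_le hU'c (min_le_left _ _)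
      rwa [grDist] at this
    rw [rank_eq_of_lt_one h1, hW₀]
  -- linear equivalences
  have hMcomp : (Matrix.toEuclideanLin M').comp (Matrix.toEuclideanLin M) = LinearMap.id := by
    apply LinearMap.ext; intro x
    rw [LinearMap.comp_apply, ← lin_mul, hM'M, lin_one, LinearMap.id_apply]
  have hMcomp' : (Matrix.toEuclideanLin M).comp (Matrix.toEuclideanLin M') = LinearMap.id := by
    apply LinearMap.ext; intro x
    rw [LinearMap.comp_apply, ← lin_mul, hMM', lin_one, LinearMap.id_apply]
  set eM : EuclideanSpace ℝ (Fin d) ≃ₗ[ℝ] EuclideanSpace ℝ (Fin d) :=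
    LinearEquiv.ofLinear (Matrix.toEuclideanLin M) (Matrix.toEuclideanLin M') hMcomp' hMcomp with heM
  have hHcomp : (Matrix.toEuclideanLin M'ᴴ).comp (Matrix.toEuclideanLin Mᴴ) = LinearMap.id := by
    apply LinearMap.ext; intro x
    rw [LinearMap.comp_apply, ← lin_mul, hM'H, lin_one, LinearMap.id_apply]
  have hHcomp' : (Matrix.toEuclideanLin Mᴴ).comp (Matrix.toEuclideanLin M'ᴴ) = LinearMap.id := by
    apply LinearMap.ext; intro x
    rw [LinearMap.comp_apply, ← lin_mul, hMH, lin_one, LinearMap.id_apply]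
  set eMH : EuclideanSpace ℝ (Fin d) ≃ₗ[ℝ] EuclideanSpace ℝ (Fin d) :=
    LinearEquiv.ofLinear (Matrix.toEuclideanLin Mᴴ) (Matrix.toEuclideanLin M'ᴴ) hHcomp' hHcomp with heMH
  -- maps between R and U
  have hcommB : (M * Mᴴ) * M = M * (Mᴴ * M) := by rw [Matrix.mul_assoc]
  have hcommC : (Mᴴ * M) * Mᴴ = Mᴴ * (M * Mᴴ) := by rw [Matrix.mul_assoc]
  have hRU : Submodule.map (Matrix.toEuclideanLin M) R ≤ U := by
    rw [hR, hU, Usp, Submodule.map_iSup]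
    apply iSup_le
    intro μ
    rw [Submodule.map_iSup]
    apply iSup_le
    intro hμ
    have : Submodule.map (Matrix.toEuclideanLin M)
        (Module.End.eigenspace (Matrix.toEuclideanLin (Mᴴ * M)) μ)
        ≤ Module.End.eigenspace (Matrix.toEuclideanLin (M * Mᴴ)) μ := by
      rintro _ ⟨x, hx, rfl⟩
      exact Module.End.mem_eigenspace_iff.2 (eig_map hcommB (Module.End.mem_eigenspace_iff.1 hx))
    exact le_trans this (le_iSup₂ (f := fun μ _ => Module.End.eigenspace
      (Matrix.toEuclideanLin (M * Mᴴ)) μ) μ hμ)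
  have hUR : Submodule.map (Matrix.toEuclideanLin Mᴴ) U ≤ R := by
    rw [hR, hU, Usp, Submodule.map_iSup]
    apply iSup_le
    intro μ
    rw [Submodule.map_iSup]
    apply iSup_le
    intro hμ
    have : Submodule.map (Matrix.toEuclideanLin Mᴴ)
        (Module.End.eigenspace (Matrix.toEuclideanLin (M * Mᴴ)) μ)
        ≤ Module.End.eigenspace (Matrix.toEuclideanLin (Mᴴ * M)) μ := by
      rintro _ ⟨x, hx, rfl⟩
      exact Module.End.mem_eigenspace_iff.2 (eig_map hcommC (Module.End.mem_eigenspace_iff.1 hx))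
    exact le_trans this (le_iSup₂ (f := fun μ _ => Module.End.eigenspace
      (Matrix.toEuclideanLin (Mᴴ * M)) μ) μ hμ)
  have hdimR : finrank ℝ R = k := by
    have h1 : finrank ℝ R = finrank ℝ (Submodule.map (Matrix.toEuclideanLin M) R) := by
      have : Submodule.map (Matrix.toEuclideanLin M) R
          = Submodule.map (eM : EuclideanSpace ℝ (Fin d) →ₗ[ℝ] EuclideanSpace ℝ (Fin d)) R := rfl
      rw [this, LinearEquiv.finrank_map_eq]
    have h2 : finrank ℝ U = finrank ℝ (Submodule.map (Matrix.toEuclideanLin Mᴴ) U) := by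
      have : Submodule.map (Matrix.toEuclideanLin Mᴴ) U
          = Submodule.map (eMH : EuclideanSpace ℝ (Fin d) →ₗ[ℝ] EuclideanSpace ℝ (Fin d)) U := rfl
      rw [this, LinearEquiv.finrank_map_eq]
    have h3 : finrank ℝ R ≤ finrank ℝ U := by
      rw [h1]; exact Submodule.finrank_mono hRU
    have h4 : finrank ℝ U ≤ finrank ℝ R := by
      rw [h2]; exact Submodule.finrank_mono hUR
    omega
  -- eigen equations
  have heigC : ∀ i, Matrix.toEuclideanLin (Mᴴ * M) (bC i) = eC i • bC i := fun i => eigLin _ hC i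
  have heigD : ∀ j, Matrix.toEuclideanLin (M' * M'ᴴ) (bD j) = eD j • bD j := fun j => eigLin _ hD j
  have heCpos : ∀ i, 0 < eC i := by
    intro i
    rcases lt_or_eq_of_le ((Matrix.posSemidef_conjTranspose_mul_self M).eigenvalues_nonneg i)
      with h | h
    · exact h
    · exact absurd h.symm (eig_ne_zero hDC hC i)
  have heDpos : ∀ j, 0 < eD j := by
    intro j
    rcases lt_or_eq_of_le ((Matrix.posSemidef_self_mul_conjTranspose M').eigenvalues_nonneg j)
      with h | h
    · exact h
    · exact absurd h.symm (eig_ne_zero hCD hD j)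
  -- C acts on bD j with eigenvalue (eD j)⁻¹, D acts on bC i with (eC i)⁻¹
  have hCbD : ∀ j, Matrix.toEuclideanLin (Mᴴ * M) (bD j) = (eD j)⁻¹ • bD j := by
    intro j
    have h1 : Matrix.toEuclideanLin (Mᴴ * M) (Matrix.toEuclideanLin (M' * M'ᴴ) (bD j))
        = bD j := by rw [← lin_mul, hCD, lin_one]
    rw [heigD j, _root_.map_smul] at h1
    have h2 := congrArg (fun z => (eD j)⁻¹ • z) h1
    simp only [smul_smul, inv_mul_cancel₀ (ne_of_gt (heDpos j)), one_smul] at h2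
    exact h2
  have hDbC : ∀ i, Matrix.toEuclideanLin (M' * M'ᴴ) (bC i) = (eC i)⁻¹ • bC i := by
    intro i
    have h1 : Matrix.toEuclideanLin (M' * M'ᴴ) (Matrix.toEuclideanLin (Mᴴ * M) (bC i))
        = bC i := by rw [← lin_mul, hDC, lin_one]
    rw [heigC i, _root_.map_smul] at h1
    have h2 := congrArg (fun z => (eC i)⁻¹ • z) h1
    simp only [smul_smul, inv_mul_cancel₀ (ne_of_gt (heCpos i)), one_smul] at h2
    exact h2
  -- the key eigenvalue inequality
  have hkey : ∀ j, s'^2 ≤ eD j → (eD j)⁻¹ ≤ σ'^2 := by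
    intro j hj
    have hν : ∃ i, eB i = (eD j)⁻¹ := by
      have hx : Matrix.toEuclideanLin (M * Mᴴ) (Matrix.toEuclideanLin M (bD j))
          = (eD j)⁻¹ • Matrix.toEuclideanLin M (bD j) := eig_map hcommB (hCbD j)
      have hx0 : Matrix.toEuclideanLin M (bD j) ≠ 0 := by
        intro h0
        have : (bD j : EuclideanSpace ℝ (Fin d)) =
            Matrix.toEuclideanLin M' (Matrix.toEuclideanLin M (bD j)) := by
          rw [← lin_mul, hM'M, lin_one]
        rw [h0, map_zero] at this
        exact hD.eigenvectorBasis.orthonormal.ne_zero j this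
      exact exists_eigenvalue (M * Mᴴ) hB (Module.End.mem_eigenspace_iff.2 hx) hx0
    by_contra hgt
    push_neg at hgt
    have hbig : σ^2 ≤ (eD j)⁻¹ := by
      by_contra hlt
      push_neg at hlt
      exact absurd (eig_lt_bound hk hkd M hν hlt) (not_le.2 hgt)
    -- contradiction via dimension count
    have huR : (bD j : EuclideanSpace ℝ (Fin d)) ∈ R := by
      have h1 : (bD j : EuclideanSpace ℝ (Fin d)) ∈ Module.End.eigenspace
          (Matrix.toEuclideanLin (Mᴴ * M)) ((eD j)⁻¹) :=
        Module.End.mem_eigenspace_iff.2 (hCbD j)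
      rw [hR]
      exact (le_iSup₂ (f := fun μ _ => Module.End.eigenspace
        (Matrix.toEuclideanLin (Mᴴ * M)) μ) ((eD j)⁻¹) hbig) h1
    have huW' : (bD j : EuclideanSpace ℝ (Fin d)) ∈ W' := by
      rw [hW'span]
      exact Submodule.subset_span ⟨j, hj, rfl⟩
    have hu0 : (bD j : EuclideanSpace ℝ (Fin d)) ≠ 0 :=
      hD.eigenvectorBasis.orthonormal.ne_zero j
    have hsup : R ⊔ W' = ⊤ := by
      rw [eq_top_iff]
      have hspan : Submodule.span ℝ (Set.range ⇑bC) = ⊤ := by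
        have := bC.toBasis.span_eq
        rwa [bC.coe_toBasis] at this
      rw [← hspan, Submodule.span_le]
      rintro _ ⟨p, rfl⟩
      by_cases hp : σ^2 ≤ eC p
      · apply Submodule.mem_sup_left
        have h1 : (bC p : EuclideanSpace ℝ (Fin d)) ∈ Module.End.eigenspace
            (Matrix.toEuclideanLin (Mᴴ * M)) (eC p) :=
          Module.End.mem_eigenspace_iff.2 (heigC p)
        rw [hR]
        exact (le_iSup₂ (f := fun μ _ => Module.End.eigenspace
          (Matrix.toEuclideanLin (Mᴴ * M)) μ) (eC p) hp) h1
      · apply Submodule.mem_sup_right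
        push_neg at hp
        have hb1 : σ^2 * eD j ≤ 1 := by
          have h7 := mul_le_mul_of_nonneg_right hbig (le_of_lt (heDpos j))
          rwa [inv_mul_cancel₀ (ne_of_gt (heDpos j))] at h7
        have hb2 : eC p * s'^2 < 1 := by nlinarith [heDpos j, heCpos p, hs'pos, hp, hj, hσpos]
        have hps' : s'^2 ≤ (eC p)⁻¹ := by
          rw [← one_div, le_div_iff₀ (heCpos p)]
          nlinarith [hb2]
        have h1 : (bC p : EuclideanSpace ℝ (Fin d)) ∈ Module.End.eigenspace
            (Matrix.toEuclideanLin (M' * M'ᴴ)) ((eC p)⁻¹) :=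
          Module.End.mem_eigenspace_iff.2 (hDbC p)
        rw [hW', Usp]
        exact (le_iSup₂ (f := fun μ _ => Module.End.eigenspace
          (Matrix.toEuclideanLin (M' * M'ᴴ)) μ) ((eC p)⁻¹) hps') h1
    have hcount := Submodule.finrank_sup_add_finrank_inf_eq R W'
    rw [hsup] at hcount
    have htop : finrank ℝ (⊤ : Submodule ℝ (EuclideanSpace ℝ (Fin d))) = d := by
      rw [finrank_top]; exact finrank_euclideanSpace_fin
    rw [htop, hdimR, hdimW'] at hcount
    have hzero : finrank ℝ ↥(R ⊓ W') = 0 := by omega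
    have : (R ⊓ W') = ⊥ := Submodule.finrank_eq_zero.1 hzero
    rw [Submodule.eq_bot_iff] at this
    exact hu0 (this _ ⟨huR, huW'⟩)
  -- orthogonality : R ≤ W'ᗮ
  have horth : R ≤ W'ᗮ := by
    rw [hRspan, hW'span]
    have hO : Submodule.span ℝ (⇑bC '' {i | σ^2 ≤ eC i})
        ⟂ Submodule.span ℝ (⇑bD '' {j | s'^2 ≤ eD j}) := by
      rw [Submodule.isOrtho_span]
      rintro u ⟨p, hp, rfl⟩ v ⟨j, hj, rfl⟩
      have hne : eC p ≠ (eD j)⁻¹ := by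
        have h1 := hkey j hj
        have h2 : σ'^2 < σ^2 := by nlinarith [hσ'pos, hσ'σ, hσpos]
        intro hEq
        simp only [Set.mem_setOf_eq] at hp
        rw [hEq] at hp
        linarith
      exact eig_orth hC (heigC p) (hCbD j) hne
    exact hO
  have hReq : R = W'ᗮ := by
    apply Submodule.eq_of_le_of_finrank_eq horth
    have h1 := Submodule.finrank_add_finrank_orthogonal W'
    rw [finrank_euclideanSpace_fin] at h1
    rw [hdimR]
    omega
  -- quadratic bounds
  have hMnorm : ∀ x : EuclideanSpace ℝ (Fin d),
      ‖Matrix.toEuclideanLin M x‖^2 = inner (𝕜 := ℝ) (Matrix.toEuclideanLin (Mᴴ * M) x) x :=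
    norm_sq_eq_inner_CTC M
  have qR : ∀ r ∈ R, σ * ‖r‖ ≤ ‖Matrix.toEuclideanLin M r‖ := by
    intro r hr
    rw [hRspan] at hr
    have h1 : σ^2 * ‖r‖^2 ≤ inner (𝕜 := ℝ) (Matrix.toEuclideanLin (Mᴴ * M) r) r :=
      quad_bound_ge bC (Matrix.toEuclideanLin (Mᴴ * M)) eC heigC _ hr (fun i hi => hi)
    rw [← hMnorm r] at h1
    apply le_of_sq_le _ _ (norm_nonneg (Matrix.toEuclideanLin M r)) _ (by positivity)
    rw [mul_pow]
    exact h1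
  have qW : ∀ w ∈ W', ‖Matrix.toEuclideanLin M w‖ ≤ σ' * ‖w‖ := by
    intro w hw
    rw [hW'span] at hw
    have h1 : inner (𝕜 := ℝ) (Matrix.toEuclideanLin (Mᴴ * M) w) w
        ≤ σ'^2 * ‖w‖^2 := by
      apply quad_bound_le bD (Matrix.toEuclideanLin (Mᴴ * M)) (fun j => (eD j)⁻¹) hCbD _ hw
      intro j hj
      exact hkey j hj
    rw [← hMnorm w] at h1
    apply le_of_sq_le _ _ (by positivity) _ (norm_nonneg (Matrix.toEuclideanLin M w))
    rw [mul_pow]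
    exact h1
  -- per-vector estimate
  set A' := Submodule.map (Matrix.toEuclideanLin M) V with hA'
  have hdimA' : finrank ℝ A' = k := by
    have : A' = Submodule.map (eM : EuclideanSpace ℝ (Fin d) →ₗ[ℝ] EuclideanSpace ℝ (Fin d)) V := rfl
    rw [this, LinearEquiv.finrank_map_eq, hVk]
  have hδ' : ‖projCLM W' - projCLM W₀‖ < c/2 :=
    lt_of_lt_of_le hU'c (min_le_right _ _)
  have hclose : ∀ a ∈ A', ‖a - projCLM U a‖ ≤ η * ‖a‖ := by
    rintro _ ⟨v, hv, rfl⟩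
    set w := projCLM W' v with hw
    set r := v - w with hrdef
    have hrR : r ∈ R := by
      rw [hReq]
      exact sub_starProjection_mem_orthogonal (K := W') v
    have hwW : w ∈ W' := projCLM_mem W' v
    have bound1 : (c/2) * ‖v‖ ≤ ‖r‖ := by
      have h1 : c * ‖v‖ ≤ ‖v - projCLM W₀ v‖ := htrans v hv
      have h3 : v - projCLM W₀ v = r + (projCLM W' v - projCLM W₀ v) := by
        rw [hrdef, hw]; abel
      have h2 : ‖v - projCLM W₀ v‖ ≤ ‖r‖ + ‖projCLM W' v - projCLM W₀ v‖ := by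
        rw [h3]; exact norm_add_le _ _
      have h4 : ‖projCLM W' v - projCLM W₀ v‖ ≤ (c/2) * ‖v‖ := by
        have h5 : projCLM W' v - projCLM W₀ v = (projCLM W' - projCLM W₀) v := by
          rw [ContinuousLinearMap.sub_apply]
        rw [h5]
        calc ‖(projCLM W' - projCLM W₀) v‖ ≤ ‖projCLM W' - projCLM W₀‖ * ‖v‖ :=
              (projCLM W' - projCLM W₀).le_opNorm v
          _ ≤ (c/2) * ‖v‖ := mul_le_mul_of_nonneg_right (le_of_lt hδ') (norm_nonneg v)
      nlinarith [norm_nonneg v]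
    have hMr : Matrix.toEuclideanLin M r ∈ U :=
      hRU ⟨r, hrR, rfl⟩
    have hMveq : Matrix.toEuclideanLin M v
        = Matrix.toEuclideanLin M r + Matrix.toEuclideanLin M w := by
      rw [hrdef, map_sub]; abel
    have hMw : ‖Matrix.toEuclideanLin M w‖ ≤ σ' * ‖v‖ := by
      calc ‖Matrix.toEuclideanLin M w‖ ≤ σ' * ‖w‖ := qW w hwW
        _ ≤ σ' * ‖v‖ := by
            have : ‖w‖ ≤ ‖v‖ := projCLM_norm_le W' v
            nlinarith
    have hMv_lb : (σ * (c/2) - σ') * ‖v‖ ≤ ‖Matrix.toEuclideanLin M v‖ := by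
      have h1 : σ * ‖r‖ ≤ ‖Matrix.toEuclideanLin M r‖ := qR r hrR
      have h2 : ‖Matrix.toEuclideanLin M r‖ - ‖Matrix.toEuclideanLin M w‖
          ≤ ‖Matrix.toEuclideanLin M v‖ := by
        rw [hMveq]
        have := norm_add_le (Matrix.toEuclideanLin M r + Matrix.toEuclideanLin M w)
          (-(Matrix.toEuclideanLin M w))
        simp only [add_neg_cancel_right, norm_neg] at this
        linarith
      have h3 : σ * ((c/2) * ‖v‖) ≤ σ * ‖r‖ := by nlinarith
      nlinarith
    have hdist : ‖Matrix.toEuclideanLin M v - projCLM U (Matrix.toEuclideanLin M v)‖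
        ≤ σ' * ‖v‖ := by
      calc ‖Matrix.toEuclideanLin M v - projCLM U (Matrix.toEuclideanLin M v)‖
          ≤ ‖Matrix.toEuclideanLin M v - Matrix.toEuclideanLin M r‖ := projCLM_min U _ hMr
        _ = ‖Matrix.toEuclideanLin M w‖ := by rw [hMveq]; simp
        _ ≤ σ' * ‖v‖ := hMw
    -- now σ' * ‖v‖ ≤ η * ‖M v‖
    have hfinal : σ' * ‖v‖ ≤ η * ‖Matrix.toEuclideanLin M v‖ := by
      have h1 : σ' * (1 + η) ≤ η * (σ * (c/2) - σ') := by nlinarith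
      have h2 : 0 ≤ ‖v‖ := norm_nonneg v
      have h3 : η * ((σ * (c/2) - σ') * ‖v‖) ≤ η * ‖Matrix.toEuclideanLin M v‖ := by
        nlinarith
      nlinarith
    exact le_trans hdist hfinal
  have hL5 : ‖projCLM A' - projCLM U‖ ≤ 3 * η := by
    apply proj_dist_le (by rw [hdimA', hdimU]) (le_of_lt hη0) hη2 hclose
  -- conclusion
  have hfin : grDist A' V₀ ≤ ‖projCLM A' - projCLM U‖ + grDist U V₀ := by
    rw [grDist, grDist]
    have : projCLM A' - projCLM V₀ = (projCLM A' - projCLM U) + (projCLM U - projCLM V₀) := by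
      abel
    rw [this]
    exact norm_add_le _ _
  have hUV₀ : grDist U V₀ < ε/2 := lt_of_lt_of_le hUc (min_le_right _ _)
  calc grDist A' V₀ ≤ ‖projCLM A' - projCLM U‖ + grDist U V₀ := hfin
    _ ≤ 3 * η + grDist U V₀ := by linarith
    _ < 3 * (ε/6) + ε/2 := by linarith
    _ = ε := by ring


/-- strong dynamics-preserving convergence, uniform on compact sets
of transverse planes. -/
theorem tendsto_map_of_singular_gap (d k : ℕ) (hk : 1 ≤ k) (hkd : k < d)
    (g : ℕ → Matrix.SpecialLinearGroup (Fin d) ℝ)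
    (V₀ : Submodule ℝ (EuclideanSpace ℝ (Fin d))) (hV₀ : Module.finrank ℝ V₀ = k)
    (W₀ : Submodule ℝ (EuclideanSpace ℝ (Fin d))) (hW₀ : Module.finrank ℝ W₀ = d - k)
    (hdiv : Tendsto (fun n => sval (g n : Matrix (Fin d) (Fin d) ℝ) k /
      sval (g n : Matrix (Fin d) (Fin d) ℝ) (k + 1)) atTop atTop)
    (hU : Tendsto (fun n => grDist (Usp (g n : Matrix (Fin d) (Fin d) ℝ) k) V₀) atTop (nhds 0))
    (hU' : Tendsto (fun n => grDist (Usp ((g n)⁻¹ : Matrix (Fin d) (Fin d) ℝ) (d - k)) W₀)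
      atTop (nhds 0)) :
    (∀ V : Submodule ℝ (EuclideanSpace ℝ (Fin d)), Module.finrank ℝ V = k → IsCompl V W₀ →
      Tendsto (fun n =>
        grDist (Submodule.map (Matrix.toEuclideanLin (g n : Matrix (Fin d) (Fin d) ℝ)) V) V₀)
        atTop (nhds 0)) ∧
    (∀ S : Set (Submodule ℝ (EuclideanSpace ℝ (Fin d))),
      (∀ V ∈ S, Module.finrank ℝ V = k ∧ IsCompl V W₀) →
      IsCompact (projCLM '' S) →
      ∀ ε > (0 : ℝ), ∃ N : ℕ, ∀ n ≥ N, ∀ V ∈ S,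
        grDist (Submodule.map (Matrix.toEuclideanLin (g n : Matrix (Fin d) (Fin d) ℝ)) V) V₀ < ε) := by
  classical
  have main2 : ∀ S : Set (Submodule ℝ (EuclideanSpace ℝ (Fin d))),
      (∀ V ∈ S, Module.finrank ℝ V = k ∧ IsCompl V W₀) →
      IsCompact (projCLM '' S) →
      ∀ ε > (0 : ℝ), ∃ N : ℕ, ∀ n ≥ N, ∀ V ∈ S,
        grDist (Submodule.map (Matrix.toEuclideanLin (g n : Matrix (Fin d) (Fin d) ℝ)) V) V₀ < ε := by
    intro S hScond hK ε hε
    obtain ⟨c, hc, hcspec⟩ := unif_transversality W₀ S (fun V hV => (hScond V hV).2) hK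
    set η := min (1/2 : ℝ) (ε/6) with hη
    have hη0 : 0 < η := by
      rw [hη]; apply lt_min; norm_num; linarith
    have h1 : ∀ᶠ n in atTop, 4 / (c * η) ≤
        sval (g n : Matrix (Fin d) (Fin d) ℝ) k /
          sval (g n : Matrix (Fin d) (Fin d) ℝ) (k + 1) :=
      hdiv.eventually_ge_atTop _
    have h2 : ∀ᶠ n in atTop,
        grDist (Usp (g n : Matrix (Fin d) (Fin d) ℝ) k) V₀ < min (1/2) (ε/2) := by
      apply hU.eventually_lt_const
      apply lt_min <;> norm_num
      linarith
    have h3 : ∀ᶠ n in atTop,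
        grDist (Usp ((g n)⁻¹ : Matrix (Fin d) (Fin d) ℝ) (d - k)) W₀ < min 1 (c/2) := by
      apply hU'.eventually_lt_const
      apply lt_min <;> norm_num
      linarith
    obtain ⟨N, hN⟩ := Filter.eventually_atTop.1 ((h1.and h2).and h3)
    refine ⟨N, ?_⟩
    intro n hn V hV
    obtain ⟨⟨hg1, hg2⟩, hg3⟩ := hN n hn
    have hM'M : ((g n)⁻¹ : Matrix (Fin d) (Fin d) ℝ) * (g n : Matrix (Fin d) (Fin d) ℝ) = 1 := by
      simp
    have hMM' : (g n : Matrix (Fin d) (Fin d) ℝ) * ((g n)⁻¹ : Matrix (Fin d) (Fin d) ℝ) = 1 := by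
      simp
    exact key k hk hkd (g n : Matrix (Fin d) (Fin d) ℝ) ((g n)⁻¹ : Matrix (Fin d) (Fin d) ℝ)
      hM'M hMM' V₀ W₀ V hV₀ hW₀ (hScond V hV).1 c ε hc hε
      (fun v hv => hcspec V hV v hv) hg2 hg3 hg1
  constructor
  · intro V hfin hcompl
    have hsingle := main2 {V}
      (by
        intro V' hV'
        rw [Set.mem_singleton_iff] at hV'
        subst hV'
        exact ⟨hfin, hcompl⟩)
      (by rw [Set.image_singleton]; exact isCompact_singleton)
    rw [Metric.tendsto_atTop]
    intro ε hε
    obtain ⟨N, hN⟩ := hsingle ε hε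
    refine ⟨N, fun n hn => ?_⟩
    have h0 := hN n hn V rfl
    have hnn : 0 ≤ grDist
        (Submodule.map (Matrix.toEuclideanLin (g n : Matrix (Fin d) (Fin d) ℝ)) V) V₀ := by
      rw [grDist]; exact norm_nonneg _
    rw [Real.dist_eq, sub_zero, abs_of_nonneg hnn]
    exact h0
  · exact main2
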